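/- The Boole numbers Bl_n(λ) := Bl_n(0|λ) satisfy, for every m ≥ 0, ∑_{n=0}^{m} Bl_n(λ) S₂(m,n) = (1/2) λ^m E_m, where E_m = E_m(0) are the Euler numbers. -/

import Mathlib

open Finset PowerSeries

/-- Stirling numbers of the second kind. -/
def stirling2 : ℕ → ℕ → ℕ
  | 0, 0 => 1
  | 0, _ + 1 => 0
  | _ + 1, 0 => 0
  | n + 1, k + 1 => (k + 1) * stirling2 n (k + 1) + stirling2 n k

/-- Unsigned Stirling numbers of the first kind. -/
def stirling1 : ℕ → ℕ → ℕ
  | 0, 0 => 1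
  | 0, _ + 1 => 0
  | _ + 1, 0 => 0
  | n + 1, k + 1 => n * stirling1 n (k + 1) + stirling1 n k

/-- Signed Stirling numbers of the first kind. -/
def s1 (n l : ℕ) : ℚ := (-1) ^ (n - l) * (stirling1 n l : ℚ)

/-- The exponential generating function `∑ a n * t^n / n!` as a power series over `ℚ`. -/
noncomputable def egf (a : ℕ → ℚ) : PowerSeries ℚ :=
  PowerSeries.mk fun n => a n / (Nat.factorial n : ℚ)

/-- The binomial series `(1+t)^x = ∑ (x)_n t^n / n!` for `x : ℚ`. -/
noncomputable def onePlusTPow (x : ℚ) : PowerSeries ℚ :=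
  egf fun n => ∏ i ∈ Finset.range n, (x - i)

/-- `e^{xt}` as a power series over `ℚ`. -/
noncomputable def expXT (x : ℚ) : PowerSeries ℚ := egf fun n => x ^ n

lemma stirling2_eq_zero : ∀ {k n : ℕ}, k < n → stirling2 k n = 0 := by
  intro k
  induction k with
  | zero =>
    intro n h
    obtain ⟨n, rfl⟩ : ∃ m, n = m + 1 := ⟨n - 1, by omega⟩
    rfl
  | succ k ih =>
    intro n h
    obtain ⟨n, rfl⟩ : ∃ m, n = m + 1 := ⟨n - 1, by omega⟩
    simp [stirling2, ih (show k < n + 1 by omega), ih (show k < n by omega)]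

lemma derivative_exp' : d⁄dX ℚ (PowerSeries.exp ℚ) = PowerSeries.exp ℚ := by
  ext n
  rw [PowerSeries.coeff_derivative, PowerSeries.coeff_exp, PowerSeries.coeff_exp]
  simp [Nat.factorial_succ]
  field_simp

lemma coeff_u_pow (k : ℕ) : ∀ n, PowerSeries.coeff k ((PowerSeries.exp ℚ - 1) ^ n)
    = (stirling2 k n : ℚ) * n.factorial / k.factorial := by
  induction k with
  | zero =>
    intro n
    rw [PowerSeries.coeff_zero_eq_constantCoeff, map_pow]
    have : PowerSeries.constantCoeff (PowerSeries.exp ℚ - 1) = 0 := by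
      simp [PowerSeries.constantCoeff_exp]
    rw [this]
    cases n with
    | zero => simp [stirling2]
    | succ n => simp [stirling2_eq_zero (Nat.succ_pos n), zero_pow]
  | succ k ih =>
    intro n
    cases n with
    | zero =>
      rw [pow_zero, PowerSeries.coeff_one]
      simp [stirling2]
    | succ n =>
      have hd : d⁄dX ℚ ((PowerSeries.exp ℚ - 1) ^ (n + 1))
          = (n + 1) • ((PowerSeries.exp ℚ - 1) ^ (n + 1) + (PowerSeries.exp ℚ - 1) ^ n) := by
        rw [Derivation.leibniz_pow]
        simp only [Nat.add_sub_cancel, map_sub, derivative_exp', Derivation.map_one_eq_zero,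
          sub_zero, smul_eq_mul]
        have : (PowerSeries.exp ℚ - 1) ^ n * PowerSeries.exp ℚ
            = (PowerSeries.exp ℚ - 1) ^ (n + 1) + (PowerSeries.exp ℚ - 1) ^ n := by
          ring
        rw [this]
      have h1 : PowerSeries.coeff (k + 1) ((PowerSeries.exp ℚ - 1) ^ (n + 1)) * ((k : ℚ) + 1)
          = ((n : ℚ) + 1) * ((stirling2 k (n + 1) : ℚ) * (n + 1).factorial / k.factorial
            + (stirling2 k n : ℚ) * n.factorial / k.factorial) := by
        have := congrArg (PowerSeries.coeff k) hd
        rw [PowerSeries.coeff_derivative] at this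
        rw [this, map_nsmul, map_add, ih (n + 1), ih n]
        push_cast
        ring
      have hs : (stirling2 (k + 1) (n + 1) : ℚ)
          = (n + 1) * (stirling2 k (n + 1) : ℚ) + (stirling2 k n : ℚ) := by
        rw [show stirling2 (k + 1) (n + 1) = (n + 1) * stirling2 k (n + 1) + stirling2 k n
          from rfl]
        push_cast; ring
      have hk : ((k : ℚ) + 1) ≠ 0 := by positivity
      have hkf : (k.factorial : ℚ) ≠ 0 := by exact_mod_cast k.factorial_ne_zero
      simp only [Nat.factorial_succ] at h1 ⊢
      push_cast at h1 ⊢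
      rw [hs]
      field_simp at h1 ⊢
      linear_combination h1

theorem boole_numbers_stirling2_eq_euler_numbers (L : ℕ) (hL : 0 < L)
    (Bl : ℕ → ℚ) (E : ℕ → ℚ → ℚ)
    (hBl : egf Bl * (1 + (1 + PowerSeries.X) ^ L) = onePlusTPow 0)
    (hE : ∀ y : ℚ, egf (fun m => E m y) * (PowerSeries.exp ℚ + 1) = 2 * expXT y)
    (m : ℕ) :
    ∑ n ∈ Finset.range (m + 1), Bl n * (stirling2 m n : ℚ) =
      (1 / 2) * (L : ℚ) ^ m * E m 0 := by
  classical
  set u : PowerSeries ℚ := PowerSeries.exp ℚ - 1 with hu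
  set A : ℕ → ℚ := fun j => ∑ n ∈ Finset.range (j + 1), Bl n * (stirling2 j n : ℚ) with hA
  -- Step 0 : onePlusTPow 0 = 1
  have h0 : onePlusTPow 0 = 1 := by
    ext n
    rw [onePlusTPow, egf, PowerSeries.coeff_mk, PowerSeries.coeff_one]
    cases n with
    | zero => simp
    | succ n =>
      rw [Finset.prod_eq_zero (Finset.mem_range.2 n.succ_pos) (by norm_num)]
      simp
  rw [h0] at hBl
  -- the polynomial q
  set q : Polynomial ℚ := 1 + (1 + Polynomial.X) ^ L with hq
  have hq_coe : (q : PowerSeries ℚ) = 1 + (1 + PowerSeries.X) ^ L := by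
    rw [hq]
    push_cast
    rfl
  -- Step 1 : egf A * (1 + exp^L) = 1
  have hAmain : egf A * (1 + PowerSeries.exp ℚ ^ L) = 1 := by
    ext k
    set p : Polynomial ℚ :=
      ∑ n ∈ Finset.range (k + 1), Polynomial.C (Bl n / n.factorial) * Polynomial.X ^ n with hp
    have hp_coeff : ∀ n, n ≤ k → p.coeff n = Bl n / n.factorial := by
      intro n hn
      rw [hp, Polynomial.finset_sum_coeff]
      simp only [Polynomial.coeff_C_mul, Polynomial.coeff_X_pow, mul_ite, mul_one, mul_zero]
      rw [Finset.sum_ite_eq (Finset.range (k + 1)) n fun i => Bl i / i.factorial]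
      rw [if_pos (Finset.mem_range.2 (by omega))]
    have hpq_coeff : ∀ i, i ≤ k → (p * q).coeff i = if i = 0 then 1 else 0 := by
      intro i hi
      have h := congrArg (PowerSeries.coeff i) hBl
      rw [PowerSeries.coeff_mul, PowerSeries.coeff_one] at h
      rw [Polynomial.coeff_mul, ← h]
      refine Finset.sum_congr rfl fun pr hpr => ?_
      rw [Finset.HasAntidiagonal.mem_antidiagonal] at hpr
      rw [hp_coeff pr.1 (by omega), ← hq_coe, Polynomial.coeff_coe]
      rw [egf, PowerSeries.coeff_mk]
    have haevalq : Polynomial.aeval u q = 1 + PowerSeries.exp ℚ ^ L := by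
      rw [hq]
      simp only [map_add, map_one, map_pow, Polynomial.aeval_X]
      rw [show (1 : PowerSeries ℚ) + u = PowerSeries.exp ℚ by rw [hu]; ring]
    have haevalp : ∀ j, j ≤ k →
        PowerSeries.coeff j (Polynomial.aeval u p) = A j / j.factorial := by
      intro j hj
      rw [hp, map_sum, map_sum]
      have step : ∀ n ∈ Finset.range (k + 1),
          PowerSeries.coeff j (Polynomial.aeval u (Polynomial.C (Bl n / n.factorial)
            * Polynomial.X ^ n)) = Bl n * (stirling2 j n : ℚ) / j.factorial := by
        intro n hn
        rw [map_mul, map_pow, Polynomial.aeval_X, Polynomial.aeval_C]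
        have : algebraMap ℚ (PowerSeries ℚ) (Bl n / n.factorial)
            = PowerSeries.C (Bl n / n.factorial) := rfl
        rw [this, PowerSeries.coeff_C_mul, coeff_u_pow]
        have hnf : (n.factorial : ℚ) ≠ 0 := by exact_mod_cast n.factorial_ne_zero
        field_simp
      rw [Finset.sum_congr rfl step]
      rw [hA]
      rw [← Finset.sum_div]
      congr 1
      refine (Finset.sum_subset (Finset.range_subset_range.2 (by omega)) ?_).symm
      intro n hn hn'
      rw [stirling2_eq_zero (show j < n by
        simp only [Finset.mem_range] at hn hn'; omega)]
      simp
    have hAcoeff : ∀ j, j ≤ k →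
        PowerSeries.coeff j (egf A) = PowerSeries.coeff j (Polynomial.aeval u p) := by
      intro j hj
      rw [haevalp j hj, egf, PowerSeries.coeff_mk]
    calc PowerSeries.coeff k (egf A * (1 + PowerSeries.exp ℚ ^ L))
        = PowerSeries.coeff k (Polynomial.aeval u p * (1 + PowerSeries.exp ℚ ^ L)) := by
          rw [PowerSeries.coeff_mul, PowerSeries.coeff_mul]
          refine Finset.sum_congr rfl fun pr hpr => ?_
          rw [Finset.HasAntidiagonal.mem_antidiagonal] at hpr
          rw [hAcoeff pr.1 (by omega)]
      _ = PowerSeries.coeff k (Polynomial.aeval u (p * q)) := by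
          rw [show (Polynomial.aeval u) (p * q) = (Polynomial.aeval u) p * (Polynomial.aeval u) q
            from map_mul _ p q, haevalq]
      _ = PowerSeries.coeff k (1 : PowerSeries ℚ) := by
          rw [Polynomial.aeval_eq_sum_range' (Nat.lt_succ_self (p * q).natDegree) u]
          rw [map_sum]
          have step : ∀ s ∈ Finset.range ((p * q).natDegree + 1),
              PowerSeries.coeff k ((p * q).coeff s • u ^ s)
                = if s = 0 then (if k = 0 then (1 : ℚ) else 0) else 0 := by
            intro s _
            rw [LinearMap.map_smul, smul_eq_mul]
            by_cases hs : s = 0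
            · subst hs
              rw [hpq_coeff 0 (Nat.zero_le k), pow_zero, PowerSeries.coeff_one]
              simp
            · rw [if_neg hs]
              by_cases hsk : s ≤ k
              · rw [hpq_coeff s hsk, if_neg hs, zero_mul]
              · rw [coeff_u_pow, stirling2_eq_zero (show k < s by omega)]
                simp
          rw [Finset.sum_congr rfl step,
            Finset.sum_ite_eq' (Finset.range ((p * q).natDegree + 1)) 0
              (fun _ => if k = 0 then (1 : ℚ) else 0),
            if_pos (Finset.mem_range.2 (Nat.succ_pos _)), PowerSeries.coeff_one]
  -- Step 2 : the Euler side, rescaled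
  have hexpXT : expXT 0 = 1 := by
    ext n
    rw [expXT, egf, PowerSeries.coeff_mk, PowerSeries.coeff_one]
    cases n with
    | zero => simp
    | succ n => simp
  have hE0 := hE 0
  rw [hexpXT, mul_one] at hE0
  have hE1 := congrArg (PowerSeries.rescale (L : ℚ)) hE0
  rw [map_mul, map_add, map_one, ← PowerSeries.exp_pow_eq_rescale_exp, map_ofNat] at hE1
  have hresc : PowerSeries.rescale (L : ℚ) (egf fun m => E m 0)
      = egf fun m => (L : ℚ) ^ m * E m 0 := by
    ext n
    rw [PowerSeries.coeff_rescale, egf, egf, PowerSeries.coeff_mk, PowerSeries.coeff_mk,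
      mul_div_assoc]
  rw [hresc] at hE1
  -- Step 3 : combine
  have hGne : (1 + PowerSeries.exp ℚ ^ L : PowerSeries ℚ) ≠ 0 := by
    intro h
    have := congrArg (PowerSeries.constantCoeff) h
    simp [PowerSeries.constantCoeff_exp] at this
  have h2A : (2 : PowerSeries ℚ) * egf A = egf fun j => 2 * A j := by
    have : (2 : PowerSeries ℚ) = PowerSeries.C 2 := by
      rw [map_ofNat]
    rw [this]
    ext n
    rw [PowerSeries.coeff_C_mul, egf, egf, PowerSeries.coeff_mk, PowerSeries.coeff_mk]
    ring
  have key : egf (fun j => (L : ℚ) ^ j * E j 0) = egf fun j => 2 * A j := by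
    refine mul_right_cancel₀ hGne ?_
    rw [show egf (fun j => (L : ℚ) ^ j * E j 0) * (1 + PowerSeries.exp ℚ ^ L)
        = egf (fun j => (L : ℚ) ^ j * E j 0) * (PowerSeries.exp ℚ ^ L + 1) by ring, hE1]
    rw [← h2A, mul_assoc, hAmain, mul_one]
  have keym := congrArg (PowerSeries.coeff m) key
  rw [egf, egf, PowerSeries.coeff_mk, PowerSeries.coeff_mk] at keym
  have hmf : (m.factorial : ℚ) ≠ 0 := by exact_mod_cast m.factorial_ne_zero
  have : (L : ℚ) ^ m * E m 0 = 2 * A m := by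
    field_simp at keym
    exact keym
  rw [hA] at this
  linarith [this]
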